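/- If P ⊆ (2^ℕ)^ω is a perfect product and f: P → 2^ℕ is a Borel map, then there exists a perfect product Q ⊆ P such that the restriction f ↾ Q is continuous. -/

import Mathlib

/-- Cantor space `2^ℕ`. -/
abbrev Cantor := ℕ → Bool

/-- A perfect subset of Cantor space: nonempty, closed, no isolated points. -/
def PerfectSet (X : Set Cantor) : Prop := X.Nonempty ∧ Perfect X

/-- The length of the stem of `X`: the length of the longest finite binary string
that is an initial segment of every element of `X`. -/
noncomputable def stemLen (X : Set Cantor) : ℕ :=
  sSup {n | ∀ x ∈ X, ∀ y ∈ X, ∀ i < n, x i = y i}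

/-- Simple splitting piece `X^i = {x ∈ X | x(|stem X|) = i}`. -/
noncomputable def splitPiece (X : Set Cantor) (i : Bool) : Set Cantor :=
  {x ∈ X | x (stemLen X) = i}

/-- Iterated simple splitting `X_s`: `X_Λ = X`, `X_{s⌢i} = (X_s)^i`. -/
noncomputable def iterSplit (X : Set Cantor) (s : List Bool) : Set Cantor :=
  s.foldl splitPiece X

/-- Refinement `X ≤ₙ Y`: `X_s ⊆ Y_s` for every binary string `s` of length `n`. -/
def refines (n : ℕ) (X Y : Set Cantor) : Prop :=
  ∀ s : List Bool, s.length = n → iterSplit X s ⊆ iterSplit Y s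

/-- The perfect product `∏_k P(k) ⊆ (2^ℕ)^ω` determined by coordinatewise sets. -/
def prodSet (P : ℕ → Set Cantor) : Set (ℕ → Cantor) := {x | ∀ k, x k ∈ P k}

/-- `P` is a perfect product (given by its coordinates `P k`). -/
def PerfectProduct (P : ℕ → Set Cantor) : Prop := ∀ k, PerfectSet (P k)

/-- `q(m,j) = |{k < m : φ(k) = j}|`. -/
def qcount (phi : ℕ → ℕ) (m j : ℕ) : ℕ :=
  ((Finset.range m).filter fun k => phi k = j).card

/-- `σ/j`: the substring of `σ` read along the positions `k < |σ|` with `φ(k) = j`. -/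
def subAlong (phi : ℕ → ℕ) (j : ℕ) (σ : List Bool) : List Bool :=
  ((List.range σ.length).filter fun k => phi k = j).map fun k => σ.getD k false

/-- The split piece `P_σ` of a perfect product, coordinatewise: `P_σ(j) = (P(j))_{σ/j}`. -/
noncomputable def prodSplit (phi : ℕ → ℕ) (P : ℕ → Set Cantor) (σ : List Bool) :
    ℕ → Set Cantor :=
  fun j => iterSplit (P j) (subAlong phi j σ)

/-- Refinement of perfect products: `P ≤ₘ Q` iff `P(j) ≤_{q(m,j)} Q(j)` for all `j`. -/
def prodRef (phi : ℕ → ℕ) (m : ℕ) (P Q : ℕ → Set Cantor) : Prop :=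
  ∀ j, refines (qcount phi m j) (P j) (Q j)

/-- `D(σ,τ) = ω \ {φ(i) : i < m, σ(i) ≠ τ(i)}` (for strings of length `m`). -/
def Dset (phi : ℕ → ℕ) (m : ℕ) (σ τ : List Bool) : Set ℕ :=
  {j | ¬ ∃ i < m, σ.getD i false ≠ τ.getD i false ∧ phi i = j}

namespace Stmt10
open scoped Classical
open Set Filter Topology

/-- Cylinder set of a finite string. -/
def Cyl (u : List Bool) : Set Cantor := {x | ∀ i < u.length, x i = u.getD i false}

lemma Cyl_nil : Cyl [] = Set.univ := by ext x; simp [Cyl]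

lemma isOpen_Cyl (u : List Bool) : IsOpen (Cyl u) := by
  have : Cyl u = ⋂ i ∈ Finset.range u.length, (fun x : Cantor => x i) ⁻¹' {u.getD i false} := by
    ext x; simp [Cyl]
  rw [this]
  exact isOpen_biInter_finset fun i _ => (continuous_apply i).isOpen_preimage _ (isOpen_discrete _)

/-- First `m` values of `x` as a list. -/
def ofSeq (x : Cantor) (m : ℕ) : List Bool := List.ofFn fun i : Fin m => x i

@[simp] lemma length_ofSeq (x m) : (ofSeq x m).length = m := by simp [ofSeq]

lemma getD_ofSeq {i m : ℕ} (h : i < m) (x : Cantor) : (ofSeq x m).getD i false = x i := by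
  rw [List.getD_eq_getElem _ _ (by simpa using h)]
  simp [ofSeq]

lemma mem_ofSeq (x : Cantor) (m : ℕ) : x ∈ Cyl (ofSeq x m) := by
  intro i hi
  rw [length_ofSeq] at hi
  rw [getD_ofSeq hi]

lemma getD_prefix {u u' : List Bool} (h : u <+: u') {j : ℕ} (hj : j < u.length) :
    u'.getD j false = u.getD j false := by
  obtain ⟨t, rfl⟩ := h
  rw [List.getD_eq_getElem _ _ hj, List.getD_eq_getElem _ _ (by simp; omega)]
  simp [List.getElem_append, hj]

lemma Cyl_anti {u v : List Bool} (h : u <+: v) : Cyl v ⊆ Cyl u := by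
  intro x hx i hi
  rw [hx i (lt_of_lt_of_le hi h.length_le), getD_prefix h hi]

lemma prefix_ofSeq {x : Cantor} {u : List Bool} (hx : x ∈ Cyl u) {m : ℕ}
    (hm : u.length ≤ m) : u <+: ofSeq x m := by
  rw [List.prefix_iff_eq_take]
  apply List.ext_getElem (by simp [length_ofSeq]; omega)
  intro i h1 h2
  have hi : i < u.length := h1
  have := hx i hi
  simp only [List.getElem_take, ofSeq, List.getElem_ofFn]
  rw [List.getD_eq_getElem _ _ hi] at this
  exact this.symm

/-- Incompatibility of strings. -/
def Incompat (u v : List Bool) : Prop :=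
  ∃ j, j < u.length ∧ j < v.length ∧ u.getD j false ≠ v.getD j false

lemma Incompat.symm {u v : List Bool} (h : Incompat u v) : Incompat v u := by
  obtain ⟨j, h1, h2, h3⟩ := h; exact ⟨j, h2, h1, Ne.symm h3⟩

lemma Incompat.not_mem {u v : List Bool} (h : Incompat u v) {x : Cantor}
    (hu : x ∈ Cyl u) (hv : x ∈ Cyl v) : False := by
  obtain ⟨j, h1, h2, h3⟩ := h
  exact h3 ((hu j h1).symm.trans (hv j h2))

lemma Incompat.mono {u v u' v' : List Bool} (h : Incompat u v) (hu : u <+: u')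
    (hv : v <+: v') : Incompat u' v' := by
  obtain ⟨j, h1, h2, h3⟩ := h
  exact ⟨j, lt_of_lt_of_le h1 hu.length_le, lt_of_lt_of_le h2 hv.length_le, by
    rw [getD_prefix hu h1, getD_prefix hv h2]; exact h3⟩

lemma exists_cyl_subset {x : Cantor} {U : Set Cantor} (h : U ∈ 𝓝 x) :
    ∃ l, Cyl (ofSeq x l) ⊆ U := by
  rw [nhds_pi, Filter.mem_pi'] at h
  obtain ⟨I, t, ht, hsub⟩ := h
  refine ⟨(I.sup id) + 1, fun y hy => hsub fun i hi => ?_⟩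
  have hil : i < I.sup id + 1 := Nat.lt_succ_of_le (Finset.le_sup (f := id) hi)
  have := hy i (by simpa using hil)
  rw [getD_ofSeq (by simpa using hil)] at this
  rw [this]
  exact mem_of_mem_nhds (ht i)

lemma exists_box_subset {z : ℕ → Cantor} {U : Set (ℕ → Cantor)} (hU : U ∈ 𝓝 z) :
    ∃ L, {y : ℕ → Cantor | ∀ k < L, ∀ i < L, y k i = z k i} ⊆ U := by
  rw [nhds_pi, Filter.mem_pi'] at hU
  obtain ⟨I, t, ht, hsub⟩ := hU
  have h1 : ∀ k, ∃ l, Cyl (ofSeq (z k) l) ⊆ t k := fun k => exists_cyl_subset (ht k)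
  choose l hl using h1
  refine ⟨I.sup (fun k => max (k + 1) (l k)), fun y hy => hsub fun k hk => ?_⟩
  have hle : max (k + 1) (l k) ≤ I.sup (fun k => max (k + 1) (l k)) :=
    Finset.le_sup (f := fun k => max (k + 1) (l k)) hk
  have hle1 : k + 1 ≤ I.sup (fun k => max (k + 1) (l k)) := le_trans (le_max_left _ _) hle
  have hle2 : l k ≤ I.sup (fun k => max (k + 1) (l k)) := le_trans (le_max_right _ _) hle
  refine hl k fun i hi => ?_
  rw [length_ofSeq] at hi
  rw [hy k (by omega) i (by omega), (getD_ofSeq hi (z k))]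


theorem exists_residual_continuousOn {X : Type*} [TopologicalSpace X] [MeasurableSpace X]
    [BorelSpace X] {g : X → Cantor} (hg : Measurable g) :
    ∃ C : Set X, C ∈ residual X ∧ ContinuousOn g C := by
  choose U hUo hUe using fun u : List Bool =>
    (hg (isOpen_Cyl u).measurableSet).residualEq_isOpen
  refine ⟨⋂ u : List Bool, {x | x ∈ g ⁻¹' Cyl u ↔ x ∈ U u}, ?_, ?_⟩
  · rw [countable_iInter_mem]
    intro u
    filter_upwards [hUe u] with x hx
    show (g ⁻¹' Cyl u) x ↔ U u x
    rw [hx]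
  · intro x hx
    simp only [Set.mem_iInter] at hx
    intro V hV
    obtain ⟨l, hl⟩ := exists_cyl_subset hV
    rw [Filter.mem_map]
    refine mem_of_superset ?_ (Set.preimage_mono hl)
    rw [mem_nhdsWithin]
    refine ⟨U (ofSeq (g x) l), hUo _, ?_, ?_⟩
    · exact (hx (ofSeq (g x) l)).1 (mem_ofSeq (g x) l)
    · rintro y ⟨hy1, hy2⟩
      simp only [Set.mem_iInter] at hy2
      exact (hy2 (ofSeq (g x) l)).2 hy1

section Fusion

variable (P : ℕ → Set Cantor) (V : ℕ → Set (ℕ → Cantor))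

/-- The product set. -/
def Sp : Set (ℕ → Cantor) := {y | ∀ k, y k ∈ P k}

/-- A level assignment: for each coordinate `k` and branch `b`, a finite string. -/
abbrev Assign := ℕ → (ℕ → Bool) → List Bool

/-- The box determined by an assignment and a choice of branch for each coordinate. -/
def Box (B : Assign) (t : ℕ → ℕ → Bool) : Set (ℕ → Cantor) :=
  {y | y ∈ Sp P ∧ ∀ k, y k ∈ Cyl (B k (t k))}

/-- Invariants of a level-`n` assignment. -/
structure Base (n : ℕ) (B : Assign) : Prop where
  ne : ∀ k b, (P k ∩ Cyl (B k b)).Nonempty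
  dep : ∀ k b b', (∀ i < n, b i = b' i) → B k b = B k b'
  const : ∀ k, n ≤ k → ∀ b b', B k b = B k b'
  fin : ∃ K, ∀ k, K ≤ k → ∀ b, B k b = []

/-- Pointwise extension of assignments. -/
def Ext (B B' : Assign) : Prop := ∀ k b, B k b <+: B' k b

lemma Ext.refl (B : Assign) : Ext B B := fun _ _ => List.prefix_refl _

lemma Ext.trans {B B' B'' : Assign} (h : Ext B B') (h' : Ext B' B'') : Ext B B'' :=
  fun k b => (h k b).trans (h' k b)

lemma Box_anti {B B' : Assign} (h : Ext B B') (t : ℕ → ℕ → Bool) :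
    Box P B' t ⊆ Box P B t :=
  fun _ hy => ⟨hy.1, fun k => Cyl_anti (h k (t k)) (hy.2 k)⟩

/-- The splitting condition at stage `n`. -/
def Split (n : ℕ) (B : Assign) : Prop :=
  ∀ k, k ≤ n → ∀ b b', (∀ i < n, b i = b' i) → b n ≠ b' n →
    Incompat (B k b) (B k b')

lemma Split.of_ext {n : ℕ} {B B' : Assign} (h : Split n B) (he : Ext B B') :
    Split n B' :=
  fun k hk b b' hag hne => (h k hk b b' hag hne).mono (he k b) (he k b')

variable {P}

/-- Each piece of a perfect set can be split in two incompatible pieces. -/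
lemma split_exists (hP : ∀ k, (P k).Nonempty ∧ Perfect (P k)) (k : ℕ) (w : List Bool)
    (hw : (P k ∩ Cyl w).Nonempty) :
    ∃ v : Bool → List Bool, (∀ i, w <+: v i ∧ (P k ∩ Cyl (v i)).Nonempty) ∧
      Incompat (v false) (v true) := by
  obtain ⟨x, hxP, hxw⟩ := hw
  have hacc := (hP k).2.acc x hxP
  rw [accPt_iff_nhds] at hacc
  obtain ⟨y, ⟨hy1, hy2⟩, hyx⟩ := hacc (Cyl (ofSeq x w.length))
    ((isOpen_Cyl _).mem_nhds (mem_ofSeq _ _))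
  -- y agrees with x below w.length
  have hyagree : ∀ i < w.length, y i = x i := by
    intro i hi
    have := hy1 i (by rwa [length_ofSeq])
    rwa [getD_ofSeq (by exact hi)] at this
  obtain ⟨j, hj⟩ : ∃ j, x j ≠ y j := by
    by_contra h
    push_neg at h
    exact hyx (funext fun i => (h i).symm)
  have hjw : w.length ≤ j := by
    by_contra h
    push_neg at h
    exact hj (hyagree j h).symm
  have hyw : y ∈ Cyl w := fun i hi => by rw [hyagree i hi]; exact hxw i hi
  refine ⟨fun i => if i then ofSeq y (j+1) else ofSeq x (j+1), ?_, ?_⟩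
  · intro i
    cases i <;> simp only [if_true, if_false, Bool.false_eq_true, ite_false, ite_true]
    · exact ⟨prefix_ofSeq hxw (by omega), ⟨x, hxP, mem_ofSeq _ _⟩⟩
    · exact ⟨prefix_ofSeq hyw (by omega), ⟨y, hy2, mem_ofSeq _ _⟩⟩
  · refine ⟨j, ?_, ?_, ?_⟩ <;>
      simp only [Bool.false_eq_true, ite_false, ite_true, length_ofSeq]
    · omega
    · omega
    · rw [getD_ofSeq (by omega), getD_ofSeq (by omega)]
      exact hj

/-- Step A: splitting step from level `n` to level `n+1`. -/
lemma step_split (hP : ∀ k, (P k).Nonempty ∧ Perfect (P k)) (n : ℕ) (B₀ : Assign)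
    (hB₀ : Base P n B₀) :
    ∃ B₁, Ext B₀ B₁ ∧ Base P (n+1) B₁ ∧ Split n B₁ := by
  choose v hv1 hv2 using fun k c => split_exists hP k (B₀ k c) (hB₀.ne k c)
  set trunc : (ℕ → Bool) → (ℕ → Bool) := fun b i => if i < n then b i else false with htrunc
  refine ⟨fun k b => if k ≤ n then v k (trunc b) (b n) else B₀ k b, ?_, ?_, ?_⟩
  · intro k b
    by_cases hk : k ≤ n
    · simp only [hk, if_true]
      have : B₀ k b = B₀ k (trunc b) := hB₀.dep k b (trunc b) (fun i hi => by
        simp [htrunc, hi])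
      rw [this]
      exact (hv1 k (trunc b) (b n)).1
    · simp only [hk, if_false]
      exact List.prefix_refl _
  · constructor
    · intro k b
      by_cases hk : k ≤ n
      · simp only [hk, if_true]; exact (hv1 k (trunc b) (b n)).2
      · simp only [hk, if_false]; exact hB₀.ne k b
    · intro k b b' hag
      by_cases hk : k ≤ n
      · simp only [hk, if_true]
        have h1 : trunc b = trunc b' := funext fun i => by
          by_cases hi : i < n <;> simp [htrunc, hi]
          exact hag i (by omega)
        rw [h1, hag n (by omega)]
      · simp only [hk, if_false]
        exact hB₀.dep k b b' (fun i hi => hag i (by omega))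
    · intro k hk b b'
      have hk' : ¬ (k ≤ n) := by omega
      simp only [hk', if_false]
      exact hB₀.const k (by omega) b b'
    · obtain ⟨K, hK⟩ := hB₀.fin
      refine ⟨max K (n+1), fun k hk b => ?_⟩
      have hk' : ¬ (k ≤ n) := by omega
      simp only [hk', if_false]
      exact hK k (by omega) b
  · intro k hk b b' hag hne
    simp only [hk, if_true]
    have h1 : trunc b = trunc b' := funext fun i => by
      by_cases hi : i < n <;> simp [htrunc, hi]
      exact hag i hi
    rw [h1]
    cases hbn : b n <;> cases hbn' : b' n
    · exact absurd (hbn.trans hbn'.symm) hne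
    · exact hv2 k (trunc b')
    · exact (hv2 k (trunc b')).symm
    · exact absurd (hbn.trans hbn'.symm) hne

variable {V}

/-- Step B, one tuple: shrink an assignment so that the box of tuple `t` is inside `V n`. -/
lemma step_tuple (hV : ∀ n, IsOpen (V n))
    (hVd : ∀ n (U : Set (ℕ → Cantor)), IsOpen U → (Sp P ∩ U).Nonempty →
      (Sp P ∩ U ∩ V n).Nonempty)
    (n : ℕ) (B : Assign) (hB : Base P (n+1) B) (t : ℕ → ℕ → Bool) :
    ∃ B', Ext B B' ∧ Base P (n+1) B' ∧ Box P B' t ⊆ V n := by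
  obtain ⟨K, hK⟩ := hB.fin
  choose z hz1 hz2 using fun k => hB.ne k (t k)
  set OB : Set (ℕ → Cantor) := ⋂ k ∈ Finset.range K, (fun y => y k) ⁻¹' Cyl (B k (t k))
    with hOB
  have hOBopen : IsOpen OB :=
    isOpen_biInter_finset fun k _ => (isOpen_Cyl _).preimage (continuous_apply k)
  have hSOB : (Sp P ∩ OB).Nonempty := ⟨z, fun k => hz1 k, by
    simp only [hOB, Set.mem_iInter]
    intro k _
    exact hz2 k⟩
  obtain ⟨z', ⟨hz'S, hz'OB⟩, hz'V⟩ := hVd n OB hOBopen hSOB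
  obtain ⟨L, hL⟩ := exists_box_subset ((hV n).mem_nhds hz'V)
  -- z' is in every cylinder of the tuple
  have hz'cyl : ∀ k, z' k ∈ Cyl (B k (t k)) := by
    intro k
    by_cases hk : k < K
    · simp only [hOB, Set.mem_iInter] at hz'OB
      exact hz'OB k (Finset.mem_range.2 hk)
    · rw [hK k (by omega) (t k), Cyl_nil]; trivial
  set M : ℕ → ℕ := fun k => max L (B k (t k)).length with hM
  set cond : ℕ → (ℕ → Bool) → Prop :=
    fun k b => k < L ∧ (n < k ∨ ∀ i ≤ n, b i = t k i) with hcond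
  refine ⟨fun k b => if cond k b then ofSeq (z' k) (M k) else B k b, ?_, ?_, ?_⟩
  · intro k b
    dsimp only
    by_cases hc : cond k b
    · rw [if_pos hc]
      have heq : B k b = B k (t k) := by
        rcases hc.2 with h | h
        · exact hB.const k (by omega) b (t k)
        · exact hB.dep k b (t k) (fun i hi => h i (by omega))
      rw [heq]
      exact prefix_ofSeq (hz'cyl k) (le_max_right _ _)
    · rw [if_neg hc]
  · constructor
    · intro k b
      by_cases hc : cond k b
      · rw [if_pos hc]
        exact ⟨z' k, hz'S k, mem_ofSeq _ _⟩
      · rw [if_neg hc]; exact hB.ne k b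
    · intro k b b' hag
      have hcc : cond k b ↔ cond k b' := by
        simp only [hcond]
        constructor <;> (rintro ⟨h1, h2⟩; refine ⟨h1, ?_⟩) <;>
          (rcases h2 with h2 | h2; · exact Or.inl h2) <;> refine Or.inr fun i hi => ?_
        · rw [← hag i (by omega)]; exact h2 i hi
        · rw [hag i (by omega)]; exact h2 i hi
      by_cases hc : cond k b
      · rw [if_pos hc, if_pos (hcc.1 hc)]
      · rw [if_neg hc, if_neg ((not_iff_not.2 hcc).1 hc)]
        exact hB.dep k b b' hag
    · intro k hk b b'
      have hcc : cond k b ↔ cond k b' := by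
        simp only [hcond]
        have : n < k := by omega
        constructor <;> rintro ⟨h1, _⟩ <;> exact ⟨h1, Or.inl this⟩
      by_cases hc : cond k b
      · rw [if_pos hc, if_pos (hcc.1 hc)]
      · rw [if_neg hc, if_neg ((not_iff_not.2 hcc).1 hc)]
        exact hB.const k hk b b'
    · obtain ⟨K', hK'⟩ := hB.fin
      refine ⟨max K' L, fun k hk b => ?_⟩
      have hc : ¬ cond k b := fun hc => by have := hc.1; omega
      rw [if_neg hc]
      exact hK' k (by omega) b
  · rintro y ⟨hyS, hycyl⟩
    refine hL ?_
    intro k hkL i hiL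
    have hc : cond k (t k) := ⟨hkL, Or.inr fun i _ => rfl⟩
    have := hycyl k
    dsimp only at this
    rw [if_pos hc] at this
    have := this i (by rw [length_ofSeq]; simp only [hM]; omega)
    rwa [getD_ofSeq (by simp only [hM]; omega)] at this

/-- Step B: fold over a list of tuples. -/
lemma step_fold (hV : ∀ n, IsOpen (V n))
    (hVd : ∀ n (U : Set (ℕ → Cantor)), IsOpen U → (Sp P ∩ U).Nonempty →
      (Sp P ∩ U ∩ V n).Nonempty)
    (n : ℕ) (l : List (ℕ → ℕ → Bool)) :
    ∀ B₁ : Assign, Base P (n+1) B₁ →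
    ∃ B', Ext B₁ B' ∧ Base P (n+1) B' ∧ ∀ t ∈ l, Box P B' t ⊆ V n := by
  induction l with
  | nil => exact fun B₁ hB₁ => ⟨B₁, Ext.refl B₁, hB₁, by simp⟩
  | cons t l ih =>
    intro B₁ hB₁
    obtain ⟨B₂, h12, hB₂, hbox⟩ := step_tuple hV hVd n B₁ hB₁ t
    obtain ⟨B', h2', hB', hbox'⟩ := ih B₂ hB₂
    refine ⟨B', h12.trans h2', hB', fun τ hτ => ?_⟩
    rcases List.mem_cons.1 hτ with rfl | hτ
    · exact (Box_anti P h2' τ).trans hbox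
    · exact hbox' τ hτ

/-- A full stage: from a level-`n` base to a level-`n+1` base with splitting and capture. -/
lemma stage (hP : ∀ k, (P k).Nonempty ∧ Perfect (P k)) (hV : ∀ n, IsOpen (V n))
    (hVd : ∀ n (U : Set (ℕ → Cantor)), IsOpen U → (Sp P ∩ U).Nonempty →
      (Sp P ∩ U ∩ V n).Nonempty)
    (n : ℕ) (B₀ : Assign) (hB₀ : Base P n B₀) :
    ∃ B, Ext B₀ B ∧ Base P (n+1) B ∧ Split n B ∧ ∀ t, Box P B t ⊆ V n := by
  obtain ⟨B₁, h01, hB₁, hS₁⟩ := step_split hP n B₀ hB₀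
  set ext : (Fin (n+1) → Fin (n+1) → Bool) → (ℕ → ℕ → Bool) := fun τ k i =>
    if hk : k < n+1 then (if hi : i < n+1 then τ ⟨k, hk⟩ ⟨i, hi⟩ else false) else false
    with hext
  obtain ⟨B', h1', hB', hbox⟩ := step_fold hV hVd n
    ((Finset.univ : Finset (Fin (n+1) → Fin (n+1) → Bool)).toList.map ext) B₁ hB₁
  refine ⟨B', h01.trans h1', hB', hS₁.of_ext h1', fun t => ?_⟩
  set τ : Fin (n+1) → Fin (n+1) → Bool := fun k i => t k i with hτ
  have hmem : ext τ ∈ (Finset.univ : Finset (Fin (n+1) → Fin (n+1) → Bool)).toList.map ext :=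
    List.mem_map.2 ⟨τ, Finset.mem_toList.2 (Finset.mem_univ _), rfl⟩
  have heq : ∀ k, B' k (ext τ k) = B' k (t k) := by
    intro k
    by_cases hk : k < n+1
    · refine hB'.dep k _ _ fun i hi => ?_
      simp only [hext, hk, hi, dif_pos]
      rfl
    · exact hB'.const k (by omega) _ _
  intro y hy
  exact hbox (ext τ) hmem ⟨hy.1, fun k => by rw [heq k]; exact hy.2 k⟩

lemma base_zero (hP : ∀ k, (P k).Nonempty ∧ Perfect (P k)) :
    Base P 0 (fun _ _ => ([] : List Bool)) := by
  refine ⟨fun k b => ?_, fun _ _ _ _ => rfl, fun _ _ _ _ => rfl, ⟨0, fun _ _ _ => rfl⟩⟩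
  rw [Cyl_nil, Set.inter_univ]
  exact (hP k).1

variable (P V) in
/-- The fusion sequence of assignments. -/
noncomputable def seqA (hP : ∀ k, (P k).Nonempty ∧ Perfect (P k)) (hV : ∀ n, IsOpen (V n))
    (hVd : ∀ n (U : Set (ℕ → Cantor)), IsOpen U → (Sp P ∩ U).Nonempty →
      (Sp P ∩ U ∩ V n).Nonempty) :
    (n : ℕ) → {B : Assign // Base P n B}
  | 0 => ⟨fun _ _ => [], base_zero hP⟩
  | n+1 => ⟨(stage hP hV hVd n (seqA hP hV hVd n).1 (seqA hP hV hVd n).2).choose,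
      (stage hP hV hVd n (seqA hP hV hVd n).1 (seqA hP hV hVd n).2).choose_spec.2.1⟩

lemma seqA_spec (hP : ∀ k, (P k).Nonempty ∧ Perfect (P k)) (hV : ∀ n, IsOpen (V n))
    (hVd : ∀ n (U : Set (ℕ → Cantor)), IsOpen U → (Sp P ∩ U).Nonempty →
      (Sp P ∩ U ∩ V n).Nonempty) (n : ℕ) :
    Ext (seqA P V hP hV hVd n).1 (seqA P V hP hV hVd (n+1)).1 ∧
      Split n (seqA P V hP hV hVd (n+1)).1 ∧
      ∀ t, Box P (seqA P V hP hV hVd (n+1)).1 t ⊆ V n := by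
  have h := (stage hP hV hVd n (seqA P V hP hV hVd n).1 (seqA P V hP hV hVd n).2).choose_spec
  exact ⟨h.1, h.2.2.1, h.2.2.2⟩

section Limit

variable {A : ℕ → Assign}

lemma isClosed_Cyl (u : List Bool) : IsClosed (Cyl u) := by
  have : Cyl u = ⋂ i ∈ Finset.range u.length, (fun x : Cantor => x i) ⁻¹' {u.getD i false} := by
    ext x; simp [Cyl]
  rw [this]
  exact isClosed_biInter fun i _ => (isClosed_discrete _).preimage (continuous_apply i)

lemma ext_le (hExt : ∀ n, Ext (A n) (A (n+1))) {m n : ℕ} (h : m ≤ n) :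
    Ext (A m) (A n) := by
  induction n with
  | zero => rw [Nat.le_zero.1 h]; exact Ext.refl _
  | succ n ih =>
    rcases Nat.lt_or_ge m (n+1) with h' | h'
    · exact (ih (by omega)).trans (hExt n)
    · rw [Nat.le_antisymm h h']; exact Ext.refl _

variable (A) in
/-- The limit set in coordinate `k`. -/
def Qset (P : ℕ → Set Cantor) (k : ℕ) : Set Cantor :=
  {x | ∀ n, x ∈ P k ∧ ∃ b, x ∈ Cyl (A n k b)}

lemma Qset_subset (P : ℕ → Set Cantor) (k : ℕ) : Qset A P k ⊆ P k :=
  fun _ hx => (hx 0).1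

lemma Qset_closed {P : ℕ → Set Cantor} (hBase : ∀ n, Base P n (A n))
    (hPc : ∀ k, IsClosed (P k)) (k : ℕ) : IsClosed (Qset A P k) := by
  have hrw : Qset A P k = ⋂ n, (P k ∩ ⋃ u ∈ Set.range (A n k), Cyl u) := by
    ext x
    simp only [Qset, Set.mem_iInter, Set.mem_setOf_eq, Set.mem_inter_iff, Set.mem_iUnion,
      Set.mem_range]
    constructor
    · intro h n
      obtain ⟨h1, b, hb⟩ := h n
      exact ⟨h1, A n k b, ⟨b, rfl⟩, hb⟩
    · intro h n
      obtain ⟨h1, u, ⟨b, rfl⟩, hb⟩ := h n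
      exact ⟨h1, b, hb⟩
  rw [hrw]
  refine isClosed_iInter fun n => (hPc k).inter ?_
  have hfin : (Set.range (A n k)).Finite := by
    have hsub : Set.range (A n k) ⊆
        (fun v : Fin n → Bool => A n k (fun i => if h : i < n then v ⟨i, h⟩ else false)) ''
          Set.univ := by
      rintro u ⟨b, rfl⟩
      refine ⟨fun i => b i, Set.mem_univ _, ?_⟩
      dsimp only
      refine (hBase n).dep k _ b fun i hi => ?_
      simp [hi]
    exact Set.Finite.subset (Set.finite_univ.image _) hsub
  exact hfin.isClosed_biUnion fun u _ => isClosed_Cyl u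

lemma branch_exists {P : ℕ → Set Cantor} (hBase : ∀ n, Base P n (A n))
    (hExt : ∀ n, Ext (A n) (A (n+1))) (hPc : ∀ k, IsClosed (P k)) (k : ℕ) (b : ℕ → Bool) :
    ∃ x, ∀ n, x ∈ P k ∩ Cyl (A n k b) := by
  have h := IsCompact.nonempty_iInter_of_sequence_nonempty_isCompact_isClosed
    (fun n => P k ∩ Cyl (A n k b))
    (fun n => Set.inter_subset_inter_right _ (Cyl_anti (hExt n k b)))
    (fun n => (hBase n).ne k b)
    (((hPc k).inter (isClosed_Cyl _)).isCompact)
    (fun n => (hPc k).inter (isClosed_Cyl _))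
  obtain ⟨x, hx⟩ := h
  exact ⟨x, fun n => Set.mem_iInter.1 hx n⟩

lemma branch_mem_Qset {P : ℕ → Set Cantor} {x : Cantor} {k : ℕ} {b : ℕ → Bool}
    (h : ∀ n, x ∈ P k ∩ Cyl (A n k b)) : x ∈ Qset A P k :=
  fun n => ⟨(h n).1, b, (h n).2⟩

lemma Qset_nonempty {P : ℕ → Set Cantor} (hBase : ∀ n, Base P n (A n))
    (hExt : ∀ n, Ext (A n) (A (n+1))) (hPc : ∀ k, IsClosed (P k)) (k : ℕ) :
    (Qset A P k).Nonempty := by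
  obtain ⟨x, hx⟩ := branch_exists hBase hExt hPc k (fun _ => false)
  exact ⟨x, branch_mem_Qset hx⟩

lemma len_step {P : ℕ → Set Cantor} (hBase : ∀ n, Base P n (A n))
    (hExt : ∀ n, Ext (A n) (A (n+1))) (hSplit : ∀ n, Split n (A (n+1)))
    (m k : ℕ) (hk : k ≤ m) (b : ℕ → Bool) :
    (A m k b).length < (A (m+1) k b).length := by
  set b' : ℕ → Bool := fun i => if i = m then !(b m) else b i with hb'
  have hag : ∀ i < m, b i = b' i := fun i hi => by simp [hb', Nat.ne_of_lt hi]
  have hne : b m ≠ b' m := by simp [hb']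
  obtain ⟨j, hj1, hj2, hj3⟩ := hSplit m k hk b b' hag hne
  have heqm : A m k b = A m k b' := (hBase m).dep k b b' hag
  by_contra hcon
  push_neg at hcon
  have hjm : j < (A m k b).length := lt_of_lt_of_le hj1 hcon
  have h1 : (A (m+1) k b).getD j false = (A m k b).getD j false :=
    getD_prefix (hExt m k b) hjm
  have h2 : (A (m+1) k b').getD j false = (A m k b').getD j false :=
    getD_prefix (hExt m k b') (heqm ▸ hjm)
  rw [h1, h2, heqm] at hj3
  exact hj3 rfl

lemma len_lb {P : ℕ → Set Cantor} (hBase : ∀ n, Base P n (A n))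
    (hExt : ∀ n, Ext (A n) (A (n+1))) (hSplit : ∀ n, Split n (A (n+1)))
    (k : ℕ) (b : ℕ → Bool) : ∀ d, d < (A (k+1+d) k b).length := by
  intro d
  induction d with
  | zero => exact lt_of_le_of_lt (Nat.zero_le _) (len_step hBase hExt hSplit k k le_rfl b)
  | succ d ih =>
    have := len_step hBase hExt hSplit (k+1+d) k (by omega) b
    have h2 : k+1+(d+1) = (k+1+d)+1 := by omega
    rw [h2]
    omega

lemma Qset_preperfect {P : ℕ → Set Cantor} (hBase : ∀ n, Base P n (A n))
    (hExt : ∀ n, Ext (A n) (A (n+1))) (hSplit : ∀ n, Split n (A (n+1)))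
    (hPc : ∀ k, IsClosed (P k)) (k : ℕ) : Preperfect (Qset A P k) := by
  intro x hx
  rw [accPt_iff_nhds]
  intro U hU
  obtain ⟨l, hl⟩ := exists_cyl_subset hU
  set n := k + 1 + l with hn
  obtain ⟨hxP, b, hxb⟩ := hx n
  have hlen : l < (A n k b).length := len_lb hBase hExt hSplit k b l
  set bc : Bool → (ℕ → Bool) := fun c i => if i = n then c else b i with hbc
  have hagb : ∀ c, ∀ i < n, bc c i = b i := fun c i hi => by
    simp [hbc, Nat.ne_of_lt hi]
  have hysplit := hSplit n k (by omega) (bc false) (bc true)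
    (fun i hi => by rw [hagb false i hi, hagb true i hi]) (by simp [hbc])
  obtain ⟨y₀, hy₀⟩ := branch_exists hBase hExt hPc k (bc false)
  obtain ⟨y₁, hy₁⟩ := branch_exists hBase hExt hPc k (bc true)
  have hyQ : y₀ ∈ Qset A P k ∧ y₁ ∈ Qset A P k :=
    ⟨branch_mem_Qset hy₀, branch_mem_Qset hy₁⟩
  -- both y₀ y₁ agree with x on the first l coordinates
  have hyU : ∀ (y : Cantor) (c : Bool), (∀ m, y ∈ P k ∩ Cyl (A m k (bc c))) → y ∈ U := by
    intro y c hy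
    have h1 : A n k (bc c) = A n k b := (hBase n).dep k (bc c) b (hagb c)
    have h2 : y ∈ Cyl (A n k b) := h1 ▸ (hy n).2
    refine hl ?_
    intro i hi
    rw [length_ofSeq] at hi
    rw [getD_ofSeq hi]
    have := h2 i (by omega)
    rw [this, (hxb i (by omega))]
  have hyne : y₀ ≠ y₁ := by
    intro hcon
    exact Incompat.not_mem hysplit (hcon ▸ (hy₀ (n+1)).2) ((hy₁ (n+1)).2)
  rcases eq_or_ne y₀ x with h | h
  · exact ⟨y₁, ⟨hyU y₁ true hy₁, hyQ.2⟩, fun hcon => hyne (h.trans hcon.symm ▸ rfl)⟩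
  · exact ⟨y₀, ⟨hyU y₀ false hy₀, hyQ.1⟩, h⟩

lemma Qset_capture {P : ℕ → Set Cantor} {V : ℕ → Set (ℕ → Cantor)}
    (hBox : ∀ n t, Box P (A (n+1)) t ⊆ V n) :
    ∀ x : ℕ → Cantor, (∀ k, x k ∈ Qset A P k) → ∀ n, x ∈ V n := by
  intro x hx n
  choose t ht using fun k => (hx k (n+1)).2
  exact hBox n t ⟨fun k => (hx k 0).1, ht⟩

end Limit

/-- The main fusion theorem. -/
theorem fusion {P : ℕ → Set Cantor} {V : ℕ → Set (ℕ → Cantor)}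
    (hP : ∀ k, (P k).Nonempty ∧ Perfect (P k)) (hV : ∀ n, IsOpen (V n))
    (hVd : ∀ n (U : Set (ℕ → Cantor)), IsOpen U → (Sp P ∩ U).Nonempty →
      (Sp P ∩ U ∩ V n).Nonempty) :
    ∃ Q : ℕ → Set Cantor, (∀ k, (Q k).Nonempty ∧ Perfect (Q k)) ∧ (∀ k, Q k ⊆ P k) ∧
      ∀ x : ℕ → Cantor, (∀ k, x k ∈ Q k) → ∀ n, x ∈ V n := by
  set A : ℕ → Assign := fun n => (seqA P V hP hV hVd n).1 with hA
  have hBase : ∀ n, Base P n (A n) := fun n => (seqA P V hP hV hVd n).2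
  have hExt : ∀ n, Ext (A n) (A (n+1)) := fun n => (seqA_spec hP hV hVd n).1
  have hSplit : ∀ n, Split n (A (n+1)) := fun n => (seqA_spec hP hV hVd n).2.1
  have hBox : ∀ n t, Box P (A (n+1)) t ⊆ V n := fun n => (seqA_spec hP hV hVd n).2.2
  have hPc : ∀ k, IsClosed (P k) := fun k => (hP k).2.closed
  refine ⟨Qset A P, fun k => ⟨Qset_nonempty hBase hExt hPc k,
    ⟨Qset_closed hBase hPc k, Qset_preperfect hBase hExt hSplit hPc k⟩⟩,
    fun k => Qset_subset P k, Qset_capture hBox⟩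

end Fusion

end Stmt10

open Set Filter Topology in
/-- for a perfect product `P` and a Borel map `f` on `(2^ℕ)^ω`,
there is a perfect product `Q ⊆ P` on which `f` is continuous. -/
theorem stmt10 (P : ℕ → Set Cantor) (hP : PerfectProduct P)
    (f : (ℕ → Cantor) → Cantor) (hf : Measurable f) :
    ∃ Q : ℕ → Set Cantor, PerfectProduct Q ∧ prodSet Q ⊆ prodSet P ∧
      ContinuousOn f (prodSet Q) := by
  classical
  have hP' : ∀ k, (P k).Nonempty ∧ Perfect (P k) := hP
  set S : Set (ℕ → Cantor) := Stmt10.Sp P with hS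
  have hSne : S.Nonempty := by
    choose z hz using fun k => (hP' k).1
    exact ⟨z, hz⟩
  haveI : Nonempty S := hSne.to_subtype
  have hg : Measurable (fun y : S => f y) := hf.comp measurable_subtype_coe
  obtain ⟨C, hCres, hCcont⟩ := Stmt10.exists_residual_continuousOn hg
  rw [mem_residual_iff] at hCres
  obtain ⟨Ss, hSo, hSd, hSc, hSsub⟩ := hCres
  obtain ⟨D, hD⟩ := (hSc.insert (Set.univ : Set S)).exists_eq_range
    ⟨_, Set.mem_insert _ _⟩
  have hDmem : ∀ n, D n ∈ insert (Set.univ : Set S) Ss := fun n => by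
    rw [hD]; exact ⟨n, rfl⟩
  have hDo : ∀ n, IsOpen (D n) := fun n => by
    rcases hDmem n with h | h
    · rw [h]; exact isOpen_univ
    · exact hSo _ h
  have hDd : ∀ n, Dense (D n) := fun n => by
    rcases hDmem n with h | h
    · rw [h]; exact dense_univ
    · exact hSd _ h
  have hDC : (⋂ n, D n) ⊆ C := by
    refine Set.Subset.trans ?_ hSsub
    intro y hy s hs
    have : s ∈ Set.range D := by rw [← hD]; exact Set.mem_insert_of_mem _ hs
    obtain ⟨n, rfl⟩ := this
    exact Set.mem_iInter.1 hy n
  -- ambient opens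
  have hVex : ∀ n, ∃ U : Set (ℕ → Cantor), IsOpen U ∧ Subtype.val ⁻¹' U = D n :=
    fun n => isOpen_induced_iff.1 (hDo n)
  choose V hVo hVeq using hVex
  have hVd : ∀ n (U : Set (ℕ → Cantor)), IsOpen U → (Stmt10.Sp P ∩ U).Nonempty →
      (Stmt10.Sp P ∩ U ∩ V n).Nonempty := by
    intro n U hU ⟨x, hxS, hxU⟩
    have hopen : IsOpen (Subtype.val ⁻¹' U : Set S) := hU.preimage continuous_subtype_val
    have hne : (Subtype.val ⁻¹' U : Set S).Nonempty := ⟨⟨x, hxS⟩, hxU⟩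
    obtain ⟨y, hy1, hy2⟩ := (hDd n).inter_open_nonempty _ hopen hne
    rw [← hVeq n] at hy2
    exact ⟨y.1, ⟨y.2, hy1⟩, hy2⟩
  obtain ⟨Q, hQ1, hQ2, hQ3⟩ := Stmt10.fusion hP' hVo hVd
  have hQS : prodSet Q ⊆ S := fun x hx k => hQ2 k (hx k)
  refine ⟨Q, fun k => hQ1 k, fun x hx k => hQ2 k (hx k), ?_⟩
  -- continuity
  set Q' : Set S := Subtype.val ⁻¹' (prodSet Q) with hQ'
  have hQ'C : Q' ⊆ C := by
    intro y hy
    refine hDC (Set.mem_iInter.2 fun n => ?_)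
    rw [← hVeq n]
    exact hQ3 y.1 hy n
  have himg : Subtype.val '' Q' = prodSet Q := by
    rw [hQ', Set.image_preimage_eq_inter_range, Subtype.range_val]
    exact Set.inter_eq_self_of_subset_left hQS
  intro x hx
  have hxS : x ∈ S := hQS hx
  have hxC : (⟨x, hxS⟩ : S) ∈ C := hQ'C hx
  have h1 : ContinuousWithinAt (fun y : S => f y) Q' ⟨x, hxS⟩ :=
    (hCcont _ hxC).mono hQ'C
  have hmap : Filter.map (Subtype.val : S → (ℕ → Cantor)) (𝓝[Q'] (⟨x, hxS⟩ : S)) =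
      𝓝[prodSet Q] x := by
    rw [Topology.IsEmbedding.subtypeVal.map_nhdsWithin_eq, himg]
  unfold ContinuousWithinAt
  rw [← hmap, Filter.tendsto_map'_iff]
  exact h1
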